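/- arXiv:1907.04668 — 5 statements merged into one kernel-verified Lean document; each statement's English description precedes it below -/
import Mathlib

section
/- Let G be a finite group and let H₁, H₂ be subgroups of G. Then the number of double cosets H₁\G/H₂, multiplied by |H₁|·|H₂|, equals the sum over all conjugacy classes C of G of |H₁ ∩ C| · |H₂ ∩ C| · (|G| / |C|). -/
open MulAction Finset
open scoped Classical

section Aux
variable {G : Type*} [Group G] [Fintype G]

/-- fibers of conjugation map all have the same size -/
lemma aux_fiber_const (h x : G) (hx : ∃ c : G, c * h * c⁻¹ = x) :
    Nat.card {g : G // g * h * g⁻¹ = x} = Nat.card {g : G // g * h * g⁻¹ = h} := by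
  obtain ⟨c, hc⟩ := hx
  refine Nat.card_congr ⟨fun g => ⟨c⁻¹ * g.1, ?_⟩, fun g => ⟨c * g.1, ?_⟩, ?_, ?_⟩
  · have := g.2
    subst hc
    show c⁻¹ * g.1 * h * (c⁻¹ * g.1)⁻¹ = h
    calc c⁻¹ * g.1 * h * (c⁻¹ * g.1)⁻¹ = c⁻¹ * (g.1 * h * g.1⁻¹) * c := by group
    _ = h := by rw [this]; group
  · have := g.2
    calc c * g.1 * h * (c * g.1)⁻¹ = c * (g.1 * h * g.1⁻¹) * c⁻¹ := by group
    _ = x := by rw [this, hc]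
  · intro g; ext; simp
  · intro g; ext; simp
end Aux

section Aux2
variable {G : Type*} [Group G] [Fintype G]

lemma aux_mem_carrier (h g : G) : g * h * g⁻¹ ∈ (ConjClasses.mk h).carrier := by
  rw [ConjClasses.mem_carrier_iff_mk_eq, ConjClasses.mk_eq_mk_iff_isConj]
  exact isConj_iff.2 ⟨g⁻¹, by group⟩

lemma aux_card_fiber_sum (h : G) (H : Subgroup G) :
    Nat.card {g : G // g * h * g⁻¹ ∈ H} =
      ((H : Set G) ∩ (ConjClasses.mk h).carrier).ncard *
        Nat.card {g : G // g * h * g⁻¹ = h} := by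
  classical
  set C : Set G := (ConjClasses.mk h).carrier with hC
  set T := {g : G // g * h * g⁻¹ ∈ H}
  let f : T → ↥((H : Set G) ∩ C) := fun g => ⟨g.1 * h * g.1⁻¹, g.2, aux_mem_carrier h g.1⟩
  have e1 : Nat.card T = ∑ y : ↥((H : Set G) ∩ C), Nat.card {g : T // f g = y} := by
    rw [← Nat.card_congr (Equiv.sigmaFiberEquiv f)]
    simp [Nat.card_eq_fintype_card, Fintype.card_sigma]
  rw [e1]
  have e2 : ∀ y : ↥((H : Set G) ∩ C), Nat.card {g : T // f g = y}
      = Nat.card {g : G // g * h * g⁻¹ = h} := by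
    rintro ⟨y, hyH, hyC⟩
    have hconj : ∃ c : G, c * h * c⁻¹ = y := by
      rw [ConjClasses.mem_carrier_iff_mk_eq, eq_comm, ConjClasses.mk_eq_mk_iff_isConj] at hyC
      exact isConj_iff.1 hyC
    rw [← aux_fiber_const h y hconj]
    refine Nat.card_congr ⟨fun g => ⟨g.1.1, ?_⟩, fun g => ⟨⟨g.1, by rw [g.2]; exact hyH⟩, ?_⟩, ?_, ?_⟩
    · have := g.2
      simpa [f, Subtype.ext_iff] using this
    · simp [f, Subtype.ext_iff, g.2]
    · intro g; ext; rfl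
    · intro g; ext; rfl
  rw [Finset.sum_congr rfl (fun y _ => e2 y), Finset.sum_const, smul_eq_mul,
    Finset.card_univ, ← Nat.card_eq_fintype_card, Nat.card_coe_set_eq]

lemma aux_card_G (h : G) :
    Nat.card G =
      (ConjClasses.mk h).carrier.ncard * Nat.card {g : G // g * h * g⁻¹ = h} := by
  have h1 := aux_card_fiber_sum h (⊤ : Subgroup G)
  have h2 : Nat.card {g : G // g * h * g⁻¹ ∈ (⊤ : Subgroup G)} = Nat.card G :=
    Nat.card_congr (Equiv.subtypeUnivEquiv fun _ => Subgroup.mem_top _)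
  rw [h2] at h1
  simpa using h1
end Aux2

section Aux3
variable {G : Type*} [Group G] [Fintype G]

lemma aux_conj_count (H : Subgroup G) (h : G) :
    Nat.card {g : G // g * h * g⁻¹ ∈ H} =
      ((H : Set G) ∩ (ConjClasses.mk h).carrier).ncard *
        (Nat.card G / (ConjClasses.mk h).carrier.ncard) := by
  have hpos : 0 < (ConjClasses.mk h).carrier.ncard :=
    (Set.ncard_pos (Set.toFinite _)).2 ⟨h, ConjClasses.mem_carrier_iff_mk_eq.2 rfl⟩
  have hdiv : Nat.card G / (ConjClasses.mk h).carrier.ncard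
      = Nat.card {g : G // g * h * g⁻¹ = h} := by
    rw [aux_card_G h, Nat.mul_div_cancel_left _ hpos]
  rw [hdiv, aux_card_fiber_sum]

lemma aux_inner (H : Subgroup G) (h : G) :
    ∑ x : H, Nat.card {g : G // g * h * g⁻¹ = ↑x} = Nat.card {g : G // g * h * g⁻¹ ∈ H} := by
  classical
  set T := {g : G // g * h * g⁻¹ ∈ H}
  let f : T → H := fun g => ⟨g.1 * h * g.1⁻¹, g.2⟩
  have e2 : ∀ x : H, Nat.card {g : T // f g = x} = Nat.card {g : G // g * h * g⁻¹ = ↑x} := by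
    intro x
    refine Nat.card_congr ⟨fun g => ⟨g.1.1, by simpa [f, Subtype.ext_iff] using g.2⟩,
      fun g => ⟨⟨g.1, by rw [g.2]; exact x.2⟩, by simp [f, Subtype.ext_iff, g.2]⟩,
      fun g => by ext; rfl, fun g => by ext; rfl⟩
  calc ∑ x : H, Nat.card {g : G // g * h * g⁻¹ = ↑x}
      = ∑ x : H, Nat.card {g : T // f g = x} := by
        exact (Finset.sum_congr rfl fun x _ => (e2 x).symm)
    _ = Nat.card T := by
        rw [← Nat.card_congr (Equiv.sigmaFiberEquiv f)]
        simp [Nat.card_eq_fintype_card, Fintype.card_sigma]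

lemma aux_group_classes (H : Subgroup G) (F : ConjClasses G → ℕ) :
    ∑ x : H, F (ConjClasses.mk ↑x) =
      ∑ C : ConjClasses G, ((H : Set G) ∩ C.carrier).ncard * F C := by
  classical
  have hcard : ∀ C : ConjClasses G, ((H : Set G) ∩ C.carrier).ncard =
      (Finset.univ.filter fun x : H => ConjClasses.mk (x : G) = C).card := by
    intro C
    rw [← Nat.card_coe_set_eq, ← Fintype.card_subtype, ← Nat.card_eq_fintype_card]
    exact Nat.card_congr ⟨fun y => ⟨⟨y.1, y.2.1⟩, ConjClasses.mem_carrier_iff_mk_eq.1 y.2.2⟩,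
      fun y => ⟨y.1.1, y.1.2, ConjClasses.mem_carrier_iff_mk_eq.2 y.2⟩,
      fun y => by ext; rfl, fun y => by ext; rfl⟩
  symm
  calc ∑ C : ConjClasses G, ((H : Set G) ∩ C.carrier).ncard * F C
      = ∑ C : ConjClasses G,
          ∑ x ∈ Finset.univ.filter (fun x : H => ConjClasses.mk (x : G) = C),
            F (ConjClasses.mk (x : G)) := by
        refine Finset.sum_congr rfl fun C _ => ?_
        rw [Finset.sum_congr rfl (fun x hx => by
          rw [(Finset.mem_filter.1 hx).2]), Finset.sum_const, smul_eq_mul, hcard C]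
    _ = ∑ x : H, F (ConjClasses.mk (x : G)) :=
        Finset.sum_fiberwise _ _ _
end Aux3

section Main
variable {G : Type*} [Group G]

instance dosetAction (H₁ H₂ : Subgroup G) : MulAction (H₁ × H₂) G where
  smul p g := (p.1 : G) * g * (p.2 : G)⁻¹
  one_smul g := by
    show ((1 : H₁) : G) * g * ((1 : H₂) : G)⁻¹ = g
    simp
  mul_smul p q g := by
    show ((p.1 * q.1 : H₁) : G) * g * ((p.2 * q.2 : H₂) : G)⁻¹
        = (p.1 : G) * ((q.1 : G) * g * (q.2 : G)⁻¹) * (p.2 : G)⁻¹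
    push_cast
    group

lemma dosetAction_smul_def (H₁ H₂ : Subgroup G) (p : H₁ × H₂) (g : G) :
    p • g = (p.1 : G) * g * (p.2 : G)⁻¹ := rfl

lemma aux_orbitRel_iff (H₁ H₂ : Subgroup G) (a b : G) :
    orbitRel (H₁ × H₂) G a b ↔ DoubleCoset.setoid (H₁ : Set G) (H₂ : Set G) a b := by
  rw [orbitRel_apply, mem_orbit_iff, DoubleCoset.rel_iff]
  constructor
  · rintro ⟨⟨h₁, h₂⟩, hp⟩
    rw [dosetAction_smul_def] at hp
    exact ⟨(h₁ : G)⁻¹, H₁.inv_mem h₁.2, h₂, h₂.2, by rw [← hp]; group⟩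
  · rintro ⟨h, hh, k, hk, rfl⟩
    refine ⟨(⟨h⁻¹, H₁.inv_mem hh⟩, ⟨k, hk⟩), ?_⟩
    rw [dosetAction_smul_def]
    show h⁻¹ * (h * a * k) * k⁻¹ = a
    group

theorem stmt0' {G : Type*} [Group G] [Finite G] (H₁ H₂ : Subgroup G) :
    Nat.card (DoubleCoset.Quotient (H₁ : Set G) (H₂ : Set G)) * (Nat.card H₁ * Nat.card H₂) =
      ∑ᶠ C : ConjClasses G,
        ((H₁ : Set G) ∩ C.carrier).ncard * ((H₂ : Set G) ∩ C.carrier).ncard *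
          (Nat.card G / C.carrier.ncard) := by
  classical
  cases nonempty_fintype G
  have hq : Nat.card (DoubleCoset.Quotient (H₁ : Set G) (H₂ : Set G))
      = Nat.card (Quotient (orbitRel (H₁ × H₂) G)) :=
    Nat.card_congr (Quotient.congrRight fun a b => (aux_orbitRel_iff H₁ H₂ a b)).symm
  have hb := MulAction.sum_card_fixedBy_eq_card_orbits_mul_card_group (H₁ × H₂) G
  rw [hq, Nat.card_eq_fintype_card, Nat.card_eq_fintype_card, Nat.card_eq_fintype_card,
    ← Fintype.card_prod, ← hb]
  have step1 : ∀ p : H₁ × H₂, Fintype.card (fixedBy G p)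
      = Nat.card {g : G // g * (p.2 : G) * g⁻¹ = (p.1 : G)} := by
    intro p
    rw [← Nat.card_eq_fintype_card]
    refine Nat.card_congr (Equiv.subtypeEquivRight fun g => ?_)
    show p • g = g ↔ _
    rw [dosetAction_smul_def, mul_inv_eq_iff_eq_mul, mul_inv_eq_iff_eq_mul, eq_comm]
  calc ∑ p : H₁ × H₂, Fintype.card (fixedBy G p)
      = ∑ h₂ : H₂, ∑ h₁ : H₁, Nat.card {g : G // g * (h₂ : G) * g⁻¹ = (h₁ : G)} := by
        rw [Fintype.sum_prod_type_right]
        exact Finset.sum_congr rfl fun h₂ _ => Finset.sum_congr rfl fun h₁ _ => step1 (h₁, h₂)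
    _ = ∑ h₂ : H₂, Nat.card {g : G // g * (h₂ : G) * g⁻¹ ∈ H₁} :=
        Finset.sum_congr rfl fun h₂ _ => aux_inner H₁ (h₂ : G)
    _ = ∑ h₂ : H₂, ((H₁ : Set G) ∩ (ConjClasses.mk (h₂ : G)).carrier).ncard *
          (Nat.card G / (ConjClasses.mk (h₂ : G)).carrier.ncard) :=
        Finset.sum_congr rfl fun h₂ _ => aux_conj_count H₁ (h₂ : G)
    _ = ∑ C : ConjClasses G, ((H₂ : Set G) ∩ C.carrier).ncard *
          (((H₁ : Set G) ∩ C.carrier).ncard * (Nat.card G / C.carrier.ncard)) :=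
        aux_group_classes H₂ fun C => ((H₁ : Set G) ∩ C.carrier).ncard *
          (Nat.card G / C.carrier.ncard)
    _ = ∑ᶠ C : ConjClasses G,
          ((H₁ : Set G) ∩ C.carrier).ncard * ((H₂ : Set G) ∩ C.carrier).ncard *
            (Nat.card G / C.carrier.ncard) := by
        rw [finsum_eq_sum_of_fintype]
        exact Finset.sum_congr rfl fun C _ => by ring
end Main

/-- **Double coset counting formula.** For a finite group `G` with subgroups `H₁, H₂`,
the number of double cosets `H₁\G/H₂`, multiplied by `|H₁|·|H₂|`, equals the sum over
all conjugacy classes `C` of `G` of `|H₁ ∩ C| · |H₂ ∩ C| · (|G| / |C|)`. -/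
theorem stmt0 {G : Type*} [Group G] [Finite G] (H₁ H₂ : Subgroup G) :
    Nat.card (DoubleCoset.Quotient (H₁ : Set G) (H₂ : Set G)) * (Nat.card H₁ * Nat.card H₂) =
      ∑ᶠ C : ConjClasses G,
        ((H₁ : Set G) ∩ C.carrier).ncard * ((H₂ : Set G) ∩ C.carrier).ncard *
          (Nat.card G / C.carrier.ncard) := by
  exact stmt0' H₁ H₂
end

section
/- Z_d(2n) · (2ⁿ·n!)^d equals the cardinality of the set {(γ₁,…,γ_d, σ₁,…,σ_{d−1}) ∈ H^d × G^{d−1} : γᵢ σᵢ γ_d σᵢ⁻¹ = 1 for all i = 1,…,d−1}. -/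
open Equiv MulAction


def xorE (c : Bool) : Bool ≃ Bool :=
  ⟨fun b => xor b c, fun b => xor b c,
   fun b => by cases b <;> cases c <;> rfl, fun b => by cases b <;> cases c <;> rfl⟩

def xiModel (n : ℕ) : Equiv.Perm (Fin n × Bool) :=
  Equiv.prodCongr (Equiv.refl _) (xorE true)

lemma xiModel_apply (n : ℕ) (p : Fin n × Bool) : xiModel n p = (p.1, !p.2) := by
  cases p with
  | mk i b => cases b <;> rfl

lemma card_centralizer_model (n : ℕ) :
    Nat.card (Subgroup.centralizer {xiModel n}) = 2 ^ n * n.factorial := by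
  classical
  set Φ : Equiv.Perm (Fin n) × (Fin n → Bool) → Subgroup.centralizer {xiModel n} :=
    fun pf => ⟨Equiv.prodShear pf.1 (fun i => xorE (pf.2 i)), by
      rw [Subgroup.mem_centralizer_singleton_iff]
      refine Equiv.ext fun p => ?_
      obtain ⟨i, b⟩ := p
      cases b <;> cases h : pf.2 i <;>
        simp [Equiv.Perm.mul_apply, xiModel_apply, Equiv.prodShear, xorE, h]⟩ with hΦ
  have hbij : Function.Bijective Φ := by
    constructor
    · rintro ⟨π, f⟩ ⟨π', f'⟩ h
      simp only [hΦ, Subtype.mk.injEq] at h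
      have h1 : ∀ i : Fin n, (π i, xor false (f i)) = (π' i, xor false (f' i)) := by
        intro i
        have := congrArg (fun (e : Equiv.Perm (Fin n × Bool)) => e (i, false)) h
        simpa [Equiv.prodShear, xorE] using this
      have hπ : π = π' := Equiv.ext fun i => (Prod.ext_iff.1 (h1 i)).1
      have hf : f = f' := by
        funext i
        have := (Prod.ext_iff.1 (h1 i)).2
        simpa using this
      simp [hπ, hf]
    · rintro ⟨σ, hσ⟩
      rw [Subgroup.mem_centralizer_singleton_iff] at hσ
      have hcomm : ∀ p, σ (xiModel n p) = xiModel n (σ p) := by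
        intro p
        have := congrArg (fun e : Equiv.Perm (Fin n × Bool) => e p) hσ
        simpa [Equiv.Perm.mul_apply] using this
      set u : Fin n → Fin n := fun i => (σ (i, false)).1 with hu
      set f : Fin n → Bool := fun i => (σ (i, false)).2 with hf
      have htrue : ∀ i, σ (i, true) = (u i, !(f i)) := by
        intro i
        have := hcomm (i, false)
        rw [xiModel_apply, xiModel_apply] at this
        simpa using this
      have huinj : Function.Injective u := by
        intro i j hij
        by_cases hb : f i = f j
        · have h2 : σ (i, false) = σ (j, false) := by
            refine Prod.ext ?_ ?_
            · exact hij
            · exact hb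
          have := σ.injective h2
          exact (Prod.ext_iff.1 this).1
        · have hbj : f j = !(f i) := by
            cases hfi : f i <;> cases hfj : f j <;> simp_all
          have h2 : σ (j, false) = σ (i, true) := by
            rw [htrue i]
            refine Prod.ext ?_ ?_
            · exact hij.symm
            · exact hbj
          have := σ.injective h2
          exact absurd (Prod.ext_iff.1 this).2 (by simp)
      refine ⟨(Equiv.ofBijective u (Finite.injective_iff_bijective.1 huinj), f), ?_⟩
      simp only [hΦ]
      refine Subtype.ext (Equiv.ext fun p => ?_)
      obtain ⟨i, b⟩ := p
      cases b
      · show ((Equiv.ofBijective u _ i : Fin n), xor false (f i)) = σ (i, false)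
        refine Prod.ext ?_ ?_
        · rfl
        · simp [hf]
      · show ((Equiv.ofBijective u _ i : Fin n), xor true (f i)) = σ (i, true)
        rw [htrue i]
        refine Prod.ext ?_ ?_
        · rfl
        · simp
  rw [← Nat.card_eq_of_bijective Φ hbij, Nat.card_prod, Nat.card_eq_fintype_card,
    Nat.card_eq_fintype_card, Fintype.card_perm, Fintype.card_fun, Fintype.card_bool,
    Fintype.card_fin, mul_comm]

/-- The symmetric group `S_{2n}`. -/
abbrev PermG (n : ℕ) := Equiv.Perm (Fin (2 * n))

/-- The centralizer `H` of the fixed-point-free involution `ξ` in `S_{2n}`;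
it is isomorphic to the wreath product `S_n[S₂]` and has order `2ⁿ·n!`. -/
def wreathH (n : ℕ) (ξ : PermG n) : Subgroup (PermG n) :=
  Subgroup.centralizer {ξ}

lemma card_centralizer_congr {G G' : Type*} [Group G] [Group G'] (φ : G ≃* G') (a : G) :
    Nat.card (Subgroup.centralizer {a} : Subgroup G) =
      Nat.card (Subgroup.centralizer {φ a} : Subgroup G') := by
  refine Nat.card_congr ⟨fun x => ⟨φ x, ?_⟩, fun y => ⟨φ.symm y, ?_⟩, fun x => by simp, fun y => by simp⟩
  · rw [Subgroup.mem_centralizer_singleton_iff, ← map_mul, ← map_mul,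
      (Subgroup.mem_centralizer_singleton_iff.1 x.2)]
  · rw [Subgroup.mem_centralizer_singleton_iff]
    have := Subgroup.mem_centralizer_singleton_iff.1 y.2
    have h2 : φ.symm (↑y * φ a) = φ.symm (φ a * ↑y) := by rw [this]
    simpa [map_mul] using h2

/-- fixed-point-free involution has cycle type `replicate n 2`. -/
lemma cycleType_fpf_involution {n : ℕ} (hn : 1 ≤ n) (ξ : PermG n)
    (hinv : ξ * ξ = 1) (hfpf : ∀ x, ξ x ≠ x) :
    ξ.cycleType = Multiset.replicate n 2 := by
  have hne : ξ ≠ 1 := by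
    intro h
    exact hfpf ⟨0, by omega⟩ (by rw [h]; rfl)
  have horder : orderOf ξ = 2 := by
    have : ξ ^ 2 = 1 := by rw [pow_two]; exact hinv
    exact orderOf_eq_prime this hne
  obtain ⟨k, hk⟩ := Equiv.Perm.cycleType_prime_order (by rw [horder]; exact Nat.prime_two)
  rw [horder] at hk
  have hsupp : ξ.support = Finset.univ := by
    refine Finset.eq_univ_iff_forall.2 fun x => Equiv.Perm.mem_support.2 (hfpf x)
  have hsum : ξ.cycleType.sum = 2 * n := by
    rw [Equiv.Perm.sum_cycleType, hsupp, Finset.card_univ, Fintype.card_fin]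
  rw [hk, Multiset.sum_replicate, smul_eq_mul] at hsum
  have : k + 1 = n := by omega
  rw [hk, this]

lemma card_wreathH {n : ℕ} (hn : 1 ≤ n) (ξ : PermG n)
    (hinv : ξ * ξ = 1) (hfpf : ∀ x, ξ x ≠ x) :
    Nat.card (wreathH n ξ) = 2 ^ n * n.factorial := by
  classical
  -- the model involution transported to `Fin (2*n)`
  let e : Fin n × Bool ≃ Fin (2 * n) :=
    ((Equiv.refl (Fin n)).prodCongr finTwoEquiv.symm).trans
      ((finProdFinEquiv).trans (finCongr (by ring)))
  let μ : Equiv.Perm (Fin n × Bool) ≃* PermG n :=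
    { Equiv.permCongr e with
      map_mul' := fun f g => by
        ext x
        simp [Equiv.permCongr, Equiv.Perm.mul_apply] }
  set ξ₁ : PermG n := μ (xiModel n) with hξ₁
  have hinv₁ : ξ₁ * ξ₁ = 1 := by
    rw [hξ₁, ← map_mul]
    have : xiModel n * xiModel n = 1 := by
      refine Equiv.ext fun p => ?_
      simp [Equiv.Perm.mul_apply, xiModel_apply]
    rw [this, map_one]
  have hfpf₁ : ∀ x, ξ₁ x ≠ x := by
    intro x hx
    have : xiModel n (e.symm x) = e.symm x := by
      have := congrArg e.symm hx
      simpa [hξ₁, μ, Equiv.permCongr] using this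
    rw [xiModel_apply] at this
    have := (Prod.ext_iff.1 this).2
    simp at this
  have hconj : IsConj ξ₁ ξ := by
    rw [Equiv.Perm.isConj_iff_cycleType_eq,
      cycleType_fpf_involution hn ξ₁ hinv₁ hfpf₁, cycleType_fpf_involution hn ξ hinv hfpf]
  obtain ⟨g, hg⟩ := isConj_iff.1 hconj
  have h1 : Nat.card (wreathH n ξ) = Nat.card (Subgroup.centralizer {ξ₁}) := by
    rw [wreathH, ← hg]
    have := card_centralizer_congr (MulAut.conj g) ξ₁
    simpa [MulAut.conj_apply] using this.symm
  rw [h1, ← card_centralizer_congr μ (xiModel n), card_centralizer_model]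

/-- Two `d`-tuples `(σ₁,…,σ_d), (σ'₁,…,σ'_d) ∈ G^d` are equivalent if there exist
`γ₁,…,γ_d ∈ H` and `γ ∈ G` with `σ'ᵢ = γᵢσᵢγ` for all `i`. -/
def tensorRel (n d : ℕ) (ξ : PermG n) (σ σ' : Fin d → PermG n) : Prop :=
  ∃ (γv : Fin d → wreathH n ξ) (γ : PermG n),
    ∀ i, σ' i = (γv i : PermG n) * σ i * γ

/-- `Z_d(2n)`: the number of equivalence classes of `d`-tuples, i.e. the number of
rank-`d` `O(N)` tensor invariants built from `2n` tensors. -/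
noncomputable def Znum (n d : ℕ) (ξ : PermG n) : ℕ :=
  Nat.card (Quot (tensorRel n d ξ))

/-- type synonym carrying the `H^{m+1}` action on `G^m`. -/
def XX (n m : ℕ) (_ξ : PermG n) : Type := Fin m → PermG n

instance (n m : ℕ) (ξ : PermG n) : MulAction (Fin (m + 1) → wreathH n ξ) (XX n m ξ) where
  smul γ τ := fun i => (γ i.castSucc : PermG n) * τ i * ((γ (Fin.last m) : PermG n))⁻¹
  one_smul τ := funext fun i => by
    show ((1 : Fin (m+1) → wreathH n ξ) i.castSucc : PermG n) * τ i *
      ((((1 : Fin (m+1) → wreathH n ξ)) (Fin.last m) : PermG n))⁻¹ = τ i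
    simp
  mul_smul γ γ' τ := funext fun i => by
    show ((γ * γ') i.castSucc : PermG n) * τ i * (((γ * γ') (Fin.last m) : PermG n))⁻¹ =
      (γ i.castSucc : PermG n) *
        ((γ' i.castSucc : PermG n) * τ i * ((γ' (Fin.last m) : PermG n))⁻¹) *
        ((γ (Fin.last m) : PermG n))⁻¹
    simp [Pi.mul_apply, mul_assoc]

lemma wreathSmul_def (n m : ℕ) (ξ : PermG n) (γ : Fin (m + 1) → wreathH n ξ) (τ : XX n m ξ) (i : Fin m) :
    (γ • τ) i = (γ i.castSucc : PermG n) * τ i * ((γ (Fin.last m) : PermG n))⁻¹ := rfl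

/-- Quotients agree. -/
noncomputable def quotEquiv (n m : ℕ) (ξ : PermG n) :
    Quot (tensorRel n (m + 1) ξ) ≃
      MulAction.orbitRel.Quotient (Fin (m + 1) → wreathH n ξ) (XX n m ξ) := by
  classical
  let f : (Fin (m + 1) → PermG n) → XX n m ξ :=
    fun σ i => σ i.castSucc * (σ (Fin.last m))⁻¹
  let g : XX n m ξ → (Fin (m + 1) → PermG n) := fun τ => Fin.snoc (α := fun _ => PermG n) (fun i => τ i) 1
  refine
    { toFun := Quot.lift (fun σ => (⟦f σ⟧ : MulAction.orbitRel.Quotient _ _)) ?_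
      invFun := Quotient.lift (fun τ => Quot.mk _ (g τ)) ?_
      left_inv := ?_
      right_inv := ?_ }
  · rintro σ σ' ⟨γv, γ, hγ⟩
    refine (Quotient.sound ?_).symm
    show f σ' ∈ MulAction.orbit _ (f σ)
    refine ⟨γv, funext fun i => ?_⟩
    show (γv • f σ) i = f σ' i
    rw [wreathSmul_def]
    simp only [f, hγ i.castSucc, hγ (Fin.last m)]
    group
  · intro τ τ' hτ
    obtain ⟨γ, hγ⟩ := hτ
    refine (Quot.sound ?_).symm
    refine ⟨γ, ((γ (Fin.last m) : PermG n))⁻¹, fun i => ?_⟩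
    refine Fin.lastCases ?_ (fun j => ?_) i
    · simp [g]
    · have hγ' : γ • τ' = τ := hγ
      simp only [g, Fin.snoc_castSucc, ← hγ', wreathSmul_def, mul_assoc]
  · intro q
    induction q using Quot.ind with | _ σ => ?_
    show Quot.mk _ (g (f σ)) = Quot.mk _ σ
    refine (Quot.sound ?_).symm
    show tensorRel n (m+1) ξ σ (g (f σ))
    refine ⟨1, (σ (Fin.last m))⁻¹, fun i => ?_⟩
    refine Fin.lastCases ?_ (fun j => ?_) i
    · simp [g]
    · simp [g, f]
  · intro q
    induction q using Quotient.ind with | _ τ => ?_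
    have h : f (g τ) = τ := funext fun i => by simp [f, g]
    show (⟦f (g τ)⟧ : MulAction.orbitRel.Quotient _ _) = ⟦τ⟧
    rw [h]

/-- `Z_d(2n) · (2ⁿ·n!)^d` equals the cardinality of the set
`{(γ₁,…,γ_d, σ₁,…,σ_{d−1}) ∈ H^d × G^{d−1} : γᵢ σᵢ γ_d σᵢ⁻¹ = 1 for all i = 1,…,d−1}`. -/
theorem stmt2 (n d : ℕ) (hn : 1 ≤ n) (hd : 1 ≤ d) (ξ : PermG n)
    (hinv : ξ * ξ = 1) (hfpf : ∀ x, ξ x ≠ x) :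
    Znum n d ξ * (2 ^ n * n.factorial) ^ d =
      Nat.card {x : (Fin d → wreathH n ξ) × (Fin (d - 1) → PermG n) //
        ∀ i : Fin (d - 1),
          (x.1 (i.castLE (Nat.sub_le d 1)) : PermG n) * x.2 i *
            (x.1 ⟨d - 1, Nat.sub_lt hd Nat.one_pos⟩ : PermG n) * (x.2 i)⁻¹ = 1} := by
  classical
  obtain ⟨m, rfl⟩ : ∃ m, d = m + 1 := ⟨d - 1, (Nat.succ_pred_eq_of_pos hd).symm⟩
  set K := Fin (m + 1) → wreathH n ξ with hKdef
  -- the twist on the last coordinate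
  set θ : K → K := fun γ => Function.update γ (Fin.last m) (γ (Fin.last m))⁻¹ with hθdef
  have hθcast : ∀ (γ : K) (j : Fin m), θ γ j.castSucc = γ j.castSucc := by
    intro γ j
    exact Function.update_of_ne (Fin.castSucc_lt_last j).ne (γ (Fin.last m))⁻¹ γ
  have hθlast : ∀ γ : K, θ γ (Fin.last m) = (γ (Fin.last m))⁻¹ := by
    intro γ
    exact Function.update_self _ _ _
  have hθθ : ∀ γ : K, θ (θ γ) = γ := by
    intro γ
    funext j
    rcases eq_or_ne j (Fin.last m) with rfl | hj
    · rw [hθlast, hθlast, inv_inv]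
    · simp only [hθdef, Function.update_of_ne hj]
  -- E1 : target subtype ≃ fixed pairs
  let E1 : {x : K × (Fin (m + 1 - 1) → PermG n) //
        ∀ i : Fin (m + 1 - 1),
          (x.1 (i.castLE (Nat.sub_le (m + 1) 1)) : PermG n) * x.2 i *
            (x.1 ⟨m + 1 - 1, Nat.sub_lt hd Nat.one_pos⟩ : PermG n) * (x.2 i)⁻¹ = 1} ≃
      {y : K × XX n m ξ // y.1 • y.2 = y.2} :=
    { toFun := fun x => ⟨(θ x.1.1, x.1.2), by
        funext i
        show (θ x.1.1 i.castSucc : PermG n) * x.1.2 i * ((θ x.1.1 (Fin.last m) : PermG n))⁻¹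
          = x.1.2 i
        rw [hθcast, hθlast]
        show (x.1.1 i.castSucc : PermG n) * x.1.2 i * (x.1.1 (Fin.last m) : PermG n) = x.1.2 i
        exact mul_inv_eq_one.mp (x.2 i)⟩
      invFun := fun y => ⟨(θ y.1.1, y.1.2), by
        intro i
        rw [mul_inv_eq_one]
        show (θ y.1.1 i.castSucc : PermG n) * y.1.2 i * (θ y.1.1 (Fin.last m) : PermG n)
          = y.1.2 i
        rw [hθcast, hθlast]
        exact congrFun y.2 i⟩
      left_inv := fun x => by
        refine Subtype.ext (Prod.ext ?_ rfl)
        exact hθθ _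
      right_inv := fun y => by
        refine Subtype.ext (Prod.ext ?_ rfl)
        exact hθθ _ }
  let E2 : {y : K × XX n m ξ // y.1 • y.2 = y.2} ≃
      Σ γ : K, (MulAction.fixedBy (XX n m ξ) γ) :=
    Equiv.subtypeProdEquivSigmaSubtype fun (a : K) (b : XX n m ξ) => a • b = b
  have hcard1 :
      Nat.card {x : K × (Fin (m + 1 - 1) → PermG n) //
        ∀ i : Fin (m + 1 - 1),
          (x.1 (i.castLE (Nat.sub_le (m + 1) 1)) : PermG n) * x.2 i *
            (x.1 ⟨m + 1 - 1, Nat.sub_lt hd Nat.one_pos⟩ : PermG n) * (x.2 i)⁻¹ = 1}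
        = Nat.card (MulAction.orbitRel.Quotient K (XX n m ξ)) * Nat.card K := by
    rw [Nat.card_congr (E1.trans E2),
      Nat.card_congr (MulAction.sigmaFixedByEquivOrbitsProdGroup K (XX n m ξ)),
      Nat.card_prod]
  have hK : Nat.card K = (2 ^ n * n.factorial) ^ (m + 1) := by
    rw [hKdef, Nat.card_pi, Finset.prod_const, card_wreathH hn ξ hinv hfpf,
      Finset.card_univ, Fintype.card_fin]
  have hZ : Znum n (m + 1) ξ = Nat.card (MulAction.orbitRel.Quotient K (XX n m ξ)) :=
    Nat.card_congr (quotEquiv n m ξ)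
  rw [hcard1, hZ, hK]
end

section
/- Z_d(2n) · (2ⁿ·n!)^d equals the sum over all conjugacy classes c of G = S_{2n} of |H ∩ c|^d · (|G| / |c|)^{d−1}. -/
set_option linter.unusedSectionVars false
set_option linter.unusedVariables false

theorem conj_eq_iff {G : Type*} [Group G] (γ a b : G) :
    a * γ * a⁻¹ = b * γ * b⁻¹ ↔ γ * (b⁻¹ * a) = b⁻¹ * a * γ := by
  constructor
  · intro h1
    have := congrArg (fun x => b⁻¹ * x * a) h1
    simpa [mul_assoc] using this.symm
  · intro h1
    have := congrArg (fun x => b * x * a⁻¹) h1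
    simpa [mul_assoc] using this.symm

theorem card_conj_fiber {G : Type*} [Group G] [Finite G] (γ h : G) (hc : IsConj γ h) :
    Nat.card {τ : G // τ * γ * τ⁻¹ = h} = Nat.card (Subgroup.centralizer {γ}) := by
  obtain ⟨τ₀, hτ₀⟩ := isConj_iff.mp hc
  apply Nat.card_congr
  refine ⟨fun τ => ⟨τ₀⁻¹ * τ.1, ?_⟩, fun z => ⟨τ₀ * z.1, ?_⟩, ?_, ?_⟩
  · rw [Subgroup.mem_centralizer_iff]
    rintro g rfl
    exact (conj_eq_iff _ _ _).mp (τ.2.trans hτ₀.symm)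
  · have hz := Subgroup.mem_centralizer_iff.mp z.2 γ rfl
    have : (τ₀ * z.1) * γ * (τ₀ * z.1)⁻¹ = τ₀ * γ * τ₀⁻¹ := by
      rw [conj_eq_iff]
      simpa using hz
    rw [this, hτ₀]
  · intro τ; ext; simp
  · intro z; ext; simp

lemma nat_card_sigma' {ι : Type*} [Fintype ι] {f : ι → Type*} [∀ i, Finite (f i)] :
    Nat.card ((i : ι) × f i) = ∑ i, Nat.card (f i) := by
  letI := fun i => Fintype.ofFinite (f i)
  simp [Nat.card_eq_fintype_card]

theorem card_N {G : Type*} [Group G] [Finite G] (H : Subgroup G) (γ : G) :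
    Nat.card {τ : G // τ * γ * τ⁻¹ ∈ H} =
      ((H : Set G) ∩ (ConjClasses.mk γ).carrier).ncard * Nat.card (Subgroup.centralizer {γ}) := by
  classical
  letI : Fintype ((H : Set G) ∩ (ConjClasses.mk γ).carrier : Set G) := Fintype.ofFinite _
  set T : Set G := (H : Set G) ∩ (ConjClasses.mk γ).carrier with hT
  let F : {τ : G // τ * γ * τ⁻¹ ∈ H} → T := fun τ =>
    ⟨τ.1 * γ * τ.1⁻¹, ⟨τ.2, by
      rw [ConjClasses.mem_carrier_iff_mk_eq, ConjClasses.mk_eq_mk_iff_isConj]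
      exact isConj_iff.mpr ⟨τ.1⁻¹, by group⟩⟩⟩
  have hcard := Nat.card_congr (Equiv.sigmaFiberEquiv F)
  rw [nat_card_sigma'] at hcard
  have hfib : ∀ h : T, Nat.card {x // F x = h} = Nat.card (Subgroup.centralizer {γ}) := by
    intro h
    have hconj : IsConj γ h.1 := by
      have := h.2.2
      rw [ConjClasses.mem_carrier_iff_mk_eq, ConjClasses.mk_eq_mk_iff_isConj] at this
      exact this.symm
    rw [← card_conj_fiber γ h.1 hconj]
    apply Nat.card_congr
    refine ⟨fun x => ⟨x.1.1, ?_⟩, fun τ => ⟨⟨τ.1, by rw [τ.2]; exact h.2.1⟩, Subtype.ext τ.2⟩, fun x => rfl, fun τ => rfl⟩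
    · have := x.2
      rw [Subtype.ext_iff] at this
      exact this
  rw [← hcard, Finset.sum_congr rfl (fun h _ => hfib h), Finset.sum_const, smul_eq_mul]
  congr 1
  rw [← Nat.card_coe_set_eq, Nat.card_eq_fintype_card, Finset.card_univ]

lemma carrier_mul_centralizer {G : Type*} [Group G] [Finite G] (γ : G) :
    (ConjClasses.mk γ).carrier.ncard * Nat.card (Subgroup.centralizer {γ}) = Nat.card G := by
  classical
  letI : Fintype G := Fintype.ofFinite G
  have h1 := MulAction.card_orbit_mul_card_stabilizer_eq_card_group (ConjAct G) γ
  have e1 : Nat.card (MulAction.orbit (ConjAct G) γ) = (ConjClasses.mk γ).carrier.ncard := by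
    rw [ConjAct.orbit_eq_carrier_conjClasses, Nat.card_coe_set_eq]
  have e2 : Nat.card (Subgroup.centralizer {γ}) =
      Nat.card (MulAction.stabilizer (ConjAct G) γ) := by
    apply Nat.card_congr
    rw [Subgroup.centralizer_eq_comap_stabilizer]
    exact ⟨fun x => ⟨ConjAct.toConjAct x.1, x.2⟩, fun y => ⟨ConjAct.ofConjAct y.1, y.2⟩,
      fun x => rfl, fun y => rfl⟩
  have e3 : Nat.card (ConjAct G) = Nat.card G := rfl
  rw [← e1, e2, ← e3, Nat.card_eq_fintype_card, Nat.card_eq_fintype_card, Nat.card_eq_fintype_card]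
  exact h1

noncomputable instance wreathHFintype (n : ℕ) (ξ : PermG n) : Fintype (wreathH n ξ) :=
  Fintype.ofFinite _

section Burnside
variable (n d : ℕ) (ξ : PermG n)

instance actKK : MulAction ((Fin d → wreathH n ξ) × PermG n) (Fin d → PermG n) where
  smul := fun k σ i => (k.1 i : PermG n) * σ i * k.2⁻¹
  one_smul := fun σ => by
    funext i
    show ((1 : Fin d → wreathH n ξ) i : PermG n) * σ i * (1 : PermG n)⁻¹ = σ i
    simp
  mul_smul := fun a b σ => by
    funext i
    show ((a.1 i * b.1 i : wreathH n ξ) : PermG n) * σ i * (a.2 * b.2)⁻¹ =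
      (a.1 i : PermG n) * ((b.1 i : PermG n) * σ i * b.2⁻¹) * a.2⁻¹
    rw [Subgroup.coe_mul]
    group

lemma smul_kk (k : (Fin d → wreathH n ξ) × PermG n) (σ : Fin d → PermG n) :
    k • σ = fun i => (k.1 i : PermG n) * σ i * k.2⁻¹ := rfl

lemma tensorRel_eq_orbitRel :
    tensorRel n d ξ = fun σ σ' => (MulAction.orbitRel ((Fin d → wreathH n ξ) × PermG n)
      (Fin d → PermG n)) σ σ' := by
  funext σ σ'
  apply propext
  constructor
  · rintro ⟨γv, γ, h⟩
    rw [MulAction.orbitRel_apply, MulAction.mem_orbit_iff]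
    refine ⟨((fun i => (γv i)⁻¹), γ), ?_⟩
    funext i
    rw [smul_kk]
    simp only [InvMemClass.coe_inv]
    rw [h i]
    group
  · intro h
    rw [MulAction.orbitRel_apply, MulAction.mem_orbit_iff] at h
    obtain ⟨k, hk⟩ := h
    refine ⟨fun i => (k.1 i)⁻¹, k.2, fun i => ?_⟩
    rw [← hk, smul_kk]
    simp only [InvMemClass.coe_inv]
    group

lemma znum_eq : Znum n d ξ = Nat.card (Quotient (MulAction.orbitRel
    ((Fin d → wreathH n ξ) × PermG n) (Fin d → PermG n))) := by
  rw [Znum, tensorRel_eq_orbitRel]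
  rfl

end Burnside

lemma fiber_sum (γ : PermG n) :
    ∑ h : wreathH n ξ, Nat.card {τ : PermG n // τ * γ * τ⁻¹ = (h : PermG n)} =
      Nat.card {τ : PermG n // τ * γ * τ⁻¹ ∈ wreathH n ξ} := by
  classical
  let F : {τ : PermG n // τ * γ * τ⁻¹ ∈ wreathH n ξ} → wreathH n ξ := fun τ => ⟨τ.1 * γ * τ.1⁻¹, τ.2⟩
  have hcard := Nat.card_congr (Equiv.sigmaFiberEquiv F)
  rw [nat_card_sigma'] at hcard
  rw [← hcard]
  refine Finset.sum_congr rfl fun h _ => ?_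
  apply Nat.card_congr
  refine ⟨fun τ => ⟨⟨τ.1, by rw [τ.2]; exact h.2⟩, Subtype.ext τ.2⟩,
    fun x => ⟨x.1.1, ?_⟩, fun τ => rfl, fun x => rfl⟩
  have := x.2
  rw [Subtype.ext_iff] at this
  exact this

lemma innerSumAux (γ : PermG n) :
    ∑ γv : Fin d → wreathH n ξ,
        Nat.card {σ : Fin d → PermG n //
          ((γv, γ) : (Fin d → wreathH n ξ) × PermG n) • σ = σ} =
      (Nat.card {τ : PermG n // τ * γ * τ⁻¹ ∈ wreathH n ξ}) ^ d := by
  classical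
  have step1 : ∀ γv : Fin d → wreathH n ξ,
      Nat.card {σ : Fin d → PermG n // ((γv, γ) : (Fin d → wreathH n ξ) × PermG n) • σ = σ} =
        ∏ i, Nat.card {τ : PermG n // τ * γ * τ⁻¹ = (γv i : PermG n)} := by
    intro γv
    have e1 : {σ : Fin d → PermG n // ((γv, γ) : (Fin d → wreathH n ξ) × PermG n) • σ = σ} ≃
        ∀ i, {τ : PermG n // τ * γ * τ⁻¹ = (γv i : PermG n)} := by
      refine (Equiv.subtypeEquiv (Equiv.refl _) fun σ => ?_).trans Equiv.subtypePiEquivPi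
      rw [smul_kk]
      simp only [Equiv.refl_apply, funext_iff]
      refine forall_congr' fun i => ?_
      constructor
      · intro h
        have := congrArg (fun x => x * γ * (σ i)⁻¹) h
        simpa [mul_assoc] using this.symm
      · intro h
        have := congrArg (fun x => x * σ i * γ⁻¹) h.symm
        simpa [mul_assoc] using this
    rw [Nat.card_congr e1, Nat.card_pi]
  rw [Finset.sum_congr rfl (fun γv _ => step1 γv), ← fiber_sum, Fintype.sum_pow]

lemma burnside :
    Znum n d ξ * (Nat.card (wreathH n ξ) ^ d * Nat.card (PermG n)) =
      ∑ γ : PermG n, (Nat.card {τ : PermG n // τ * γ * τ⁻¹ ∈ wreathH n ξ}) ^ d := by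
  classical
  letI : ∀ k : (Fin d → wreathH n ξ) × PermG n,
      Fintype (MulAction.fixedBy (Fin d → PermG n) k) := fun k => Fintype.ofFinite _
  letI : Fintype (Quotient (MulAction.orbitRel ((Fin d → wreathH n ξ) × PermG n)
      (Fin d → PermG n))) := Fintype.ofFinite _
  have hb := MulAction.sum_card_fixedBy_eq_card_orbits_mul_card_group
    ((Fin d → wreathH n ξ) × PermG n) (Fin d → PermG n)
  have lhs : (∑ k : (Fin d → wreathH n ξ) × PermG n,
      Fintype.card (MulAction.fixedBy (Fin d → PermG n) k)) =
      ∑ γ : PermG n, (Nat.card {τ : PermG n // τ * γ * τ⁻¹ ∈ wreathH n ξ}) ^ d := by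
    rw [Fintype.sum_prod_type]
    rw [Finset.sum_comm]
    refine Finset.sum_congr rfl fun γ _ => ?_
    rw [← innerSumAux γ]
    refine Finset.sum_congr rfl fun γv _ => ?_
    rw [← Nat.card_eq_fintype_card]
    exact Nat.card_congr (Equiv.subtypeEquivRight fun σ => MulAction.mem_fixedBy)
  rw [lhs] at hb
  rw [hb, znum_eq]
  have hΩ : Nat.card (Quotient (MulAction.orbitRel ((Fin d → wreathH n ξ) × PermG n)
      (Fin d → PermG n))) = Fintype.card (Quotient (MulAction.orbitRel
      ((Fin d → wreathH n ξ) × PermG n) (Fin d → PermG n))) := Nat.card_eq_fintype_card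
  rw [hΩ]
  have hK : Fintype.card ((Fin d → wreathH n ξ) × PermG n) =
      Nat.card (wreathH n ξ) ^ d * Nat.card (PermG n) := by
    rw [Fintype.card_prod, Fintype.card_fun, Fintype.card_fin, Nat.card_eq_fintype_card,
      Nat.card_eq_fintype_card]
  rw [hK]

lemma groupSumAux (hd : 1 ≤ d) :
    ∑ γ : PermG n, (Nat.card {τ : PermG n // τ * γ * τ⁻¹ ∈ wreathH n ξ}) ^ d =
      (∑ᶠ c : ConjClasses (PermG n),
        ((wreathH n ξ : Set (PermG n)) ∩ c.carrier).ncard ^ d *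
          (Nat.card (PermG n) / c.carrier.ncard) ^ (d - 1)) * Nat.card (PermG n) := by
  classical
  letI : Fintype (ConjClasses (PermG n)) := Fintype.ofFinite _
  rw [finsum_eq_sum_of_fintype, Finset.sum_mul]
  rw [← Finset.sum_fiberwise_of_maps_to (g := ConjClasses.mk)
    (t := (Finset.univ : Finset (ConjClasses (PermG n)))) (fun x _ => Finset.mem_univ _)]
  refine Finset.sum_congr rfl fun c _ => ?_
  -- facts about the class c
  obtain ⟨γ₀, hγ₀⟩ := ConjClasses.exists_rep c
  have hcent : ∀ γ : PermG n, ConjClasses.mk γ = c →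
      Nat.card (Subgroup.centralizer {γ}) = Nat.card (PermG n) / c.carrier.ncard := by
    intro γ hγ
    have h1 := carrier_mul_centralizer γ
    rw [hγ] at h1
    have hpos : 0 < c.carrier.ncard := by
      have : γ ∈ c.carrier := by rw [ConjClasses.mem_carrier_iff_mk_eq, hγ]
      have hfin : c.carrier.Finite := Set.toFinite _
      exact (Set.ncard_pos hfin).mpr ⟨γ, this⟩
    rw [← h1, Nat.mul_div_cancel_left _ hpos]
  have hfib : (Finset.univ.filter (fun γ : PermG n => ConjClasses.mk γ = c)).card
      = c.carrier.ncard := by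
    rw [ConjClasses.carrier_eq_preimage_mk]
    rw [← Set.ncard_coe_finset]
    congr 1
    ext γ
    simp [Set.mem_preimage]
  have hterm : ∀ γ ∈ Finset.univ.filter (fun γ : PermG n => ConjClasses.mk γ = c),
      (Nat.card {τ : PermG n // τ * γ * τ⁻¹ ∈ wreathH n ξ}) ^ d =
        (((wreathH n ξ : Set (PermG n)) ∩ c.carrier).ncard *
          (Nat.card (PermG n) / c.carrier.ncard)) ^ d := by
    intro γ hγ
    rw [Finset.mem_filter] at hγ
    rw [card_N, hγ.2, hcent γ hγ.2]
  rw [Finset.sum_congr rfl hterm, Finset.sum_const, hfib, smul_eq_mul]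
  -- now arithmetic
  have h1 := carrier_mul_centralizer γ₀
  rw [hγ₀] at h1
  rw [mul_pow]
  set a := ((wreathH n ξ : Set (PermG n)) ∩ c.carrier).ncard
  set b := Nat.card (PermG n) / c.carrier.ncard with hb
  set m := c.carrier.ncard
  have hbZ : b = Nat.card (Subgroup.centralizer {γ₀}) := (hcent γ₀ hγ₀).symm
  have hmb : m * b = Nat.card (PermG n) := by rw [hbZ]; exact h1
  have hdd : d = (d - 1) + 1 := by omega
  have hbd : b ^ d = b ^ (d - 1) * b := by rw [← pow_succ, ← hdd]
  calc m * (a ^ d * b ^ d) = a ^ d * b ^ (d-1) * (m * b) := by rw [hbd]; ring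
    _ = a ^ d * b ^ (d - 1) * Nat.card (PermG n) := by rw [hmb]


section StepA
variable {α : Type*}

/-- The "pair swap" permutation on `Q × Bool`. -/
def s0 (Q : Type*) : Equiv.Perm (Q × Bool) :=
  Equiv.prodCongr (Equiv.refl Q) ⟨not, not, Bool.not_not, Bool.not_not⟩

@[simp] lemma s0_apply (Q : Type*) (q : Q) (b : Bool) : s0 Q (q, b) = (q, !b) := rfl

lemma permCongr_mul {β : Type*} (e : β ≃ α) (p q : Equiv.Perm β) :
    e.permCongr (p * q) = e.permCongr p * e.permCongr q := by
  ext x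
  simp [Equiv.permCongr_apply, Equiv.Perm.mul_apply]

lemma mem_centralizer_single_iff {G : Type*} [Group G] {g z : G} :
    z ∈ Subgroup.centralizer {g} ↔ g * z = z * g := by
  rw [Subgroup.mem_centralizer_iff]
  simp

lemma card_centralizer_congr_s3 {β : Type*} (e : β ≃ α) (ζ : Equiv.Perm β) :
    Nat.card (Subgroup.centralizer ({e.permCongr ζ} : Set (Equiv.Perm α))) =
      Nat.card (Subgroup.centralizer ({ζ} : Set (Equiv.Perm β))) := by
  apply Nat.card_congr
  have key : ∀ z : Equiv.Perm β, z ∈ Subgroup.centralizer ({ζ} : Set (Equiv.Perm β)) ↔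
      e.permCongr z ∈ Subgroup.centralizer ({e.permCongr ζ} : Set (Equiv.Perm α)) := by
    intro z
    rw [mem_centralizer_single_iff, mem_centralizer_single_iff, ← permCongr_mul, ← permCongr_mul]
    exact ⟨fun h => by rw [h], fun h => e.permCongr.injective h⟩
  refine ⟨fun τ => ⟨e.permCongr.symm τ.1, ?_⟩, fun σ => ⟨e.permCongr σ.1, (key _).mp σ.2⟩,
    fun τ => Subtype.ext (e.permCongr.apply_symm_apply τ.1),
    fun σ => Subtype.ext (e.permCongr.symm_apply_apply σ.1)⟩
  rw [key]
  rw [e.permCongr.apply_symm_apply]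
  exact τ.2

lemma beq_beq (c x : Bool) : ((c == x) == x) = c := by revert c x; decide
lemma not_beq (c x : Bool) : (!(c == x)) = ((!c) == x) := by revert c x; decide
lemma true_beq (x : Bool) : (true == x) = x := by revert x; decide
lemma false_beq (x : Bool) : (false == x) = !x := by revert x; decide

/-- The centralizer of the pair swap is in bijection with `(Q → Bool) × Perm Q`. -/
lemma card_centralizer_s0 (Q : Type*) [Finite Q] :
    Nat.card (Subgroup.centralizer ({s0 Q} : Set (Equiv.Perm (Q × Bool)))) =
      2 ^ (Nat.card Q) * (Nat.card Q).factorial := by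
  classical
  let Ψ : (Q → Bool) × Equiv.Perm Q →
      Subgroup.centralizer ({s0 Q} : Set (Equiv.Perm (Q × Bool))) := fun bp =>
    ⟨⟨fun x => (bp.2 x.1, x.2 == bp.1 x.1),
      fun x => (bp.2.symm x.1, x.2 == bp.1 (bp.2.symm x.1)),
      fun x => by simp [beq_beq],
      fun x => by simp [beq_beq]⟩, by
      rw [mem_centralizer_single_iff]
      apply Equiv.ext
      rintro ⟨q, c⟩
      show ((bp.2 q, !(c == bp.1 q)) : Q × Bool) = (bp.2 q, (!c) == bp.1 q)
      rw [not_beq]⟩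
  have hinjΨ : Function.Injective Ψ := by
    rintro ⟨b, π⟩ ⟨b', π'⟩ h
    rw [Subtype.ext_iff] at h
    have h1 : ∀ q, ((π q, true == b q) : Q × Bool) = (π' q, true == b' q) := by
      intro q
      exact Equiv.congr_fun h (q, true)
    have hππ : π = π' := by
      apply Equiv.ext
      intro q
      exact (Prod.ext_iff.mp (h1 q)).1
    have hbb : b = b' := by
      funext q
      have := (Prod.ext_iff.mp (h1 q)).2
      rwa [true_beq, true_beq] at this
    rw [hππ, hbb]
  have hsurjΨ : Function.Surjective Ψ := by
    rintro ⟨σ, hσ⟩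
    rw [mem_centralizer_single_iff] at hσ
    have hcomm : ∀ x, s0 Q (σ x) = σ (s0 Q x) := fun x => Equiv.congr_fun hσ x
    have hfalse : ∀ q, σ (q, false) = ((σ (q, true)).1, !(σ (q, true)).2) := by
      intro q
      have := (hcomm (q, true)).symm
      simp only [s0_apply, Bool.not_true] at this
      exact this.trans rfl
    set π0 : Q → Q := fun q => (σ (q, true)).1 with hπ0
    have hinj : Function.Injective π0 := by
      intro q q' h
      by_cases hb : (σ (q, true)).2 = (σ (q', true)).2
      · have : σ (q, true) = σ (q', true) := Prod.ext h hb
        have := σ.injective this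
        exact (Prod.ext_iff.mp this).1
      · have hb2 : (σ (q', true)).2 = !(σ (q, true)).2 := by
          cases h1 : (σ (q, true)).2 <;> cases h2 : (σ (q', true)).2 <;> simp_all
        have : σ (q', true) = σ (q, false) := by
          rw [hfalse]
          exact Prod.ext h.symm hb2
        have := σ.injective this
        simp at this
    have hsurj : Function.Surjective π0 := by
      intro p
      obtain ⟨⟨q, c⟩, hqc⟩ := σ.surjective (p, true)
      cases c
      · refine ⟨q, ?_⟩
        rw [hfalse] at hqc
        exact (Prod.ext_iff.mp hqc).1
      · exact ⟨q, (Prod.ext_iff.mp hqc).1⟩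
    refine ⟨⟨fun q => (σ (q, true)).2, Equiv.ofBijective π0 ⟨hinj, hsurj⟩⟩, ?_⟩
    apply Subtype.ext
    apply Equiv.ext
    rintro ⟨q, c⟩
    show ((π0 q, c == (σ (q, true)).2) : Q × Bool) = σ (q, c)
    cases c
    · rw [hfalse, false_beq]
    · rw [true_beq]
  have hcard := Nat.card_eq_of_bijective Ψ ⟨hinjΨ, hsurjΨ⟩
  rw [← hcard, Nat.card_prod, Nat.card_fun]
  letI : Fintype Q := Fintype.ofFinite Q
  rw [Nat.card_eq_fintype_card (α := Equiv.Perm Q), Fintype.card_perm,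
    Nat.card_eq_fintype_card (α := Q)]
  simp [Nat.card_eq_fintype_card]
end StepA


section Pairing
variable {α : Type*} [DecidableEq α]

lemma hxx (ξ : Equiv.Perm α) (hinv : ξ * ξ = 1) (x : α) : ξ (ξ x) = x := by
  have := Equiv.congr_fun hinv x
  simpa using this

def pairSetoid (ξ : Equiv.Perm α) (hinv : ξ * ξ = 1) : Setoid α :=
  ⟨fun x y => y = x ∨ y = ξ x,
    fun _ => Or.inl rfl,
    fun {x y} h => h.elim (fun h1 => Or.inl h1.symm)
      (fun h1 => Or.inr (by rw [h1, hxx ξ hinv])),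
    fun {x y z} h1 h2 => by
      rcases h1 with rfl | rfl
      · exact h2
      · rcases h2 with rfl | rfl
        · exact Or.inr rfl
        · exact Or.inl (hxx ξ hinv x)⟩

variable (ξ : Equiv.Perm α) (hinv : ξ * ξ = 1) (hfpf : ∀ x, ξ x ≠ x)

noncomputable def pairEquiv : Quotient (pairSetoid ξ hinv) × Bool ≃ α := by
  classical
  refine ⟨fun qb => if qb.2 then qb.1.out else ξ qb.1.out,
    fun x => (Quotient.mk (pairSetoid ξ hinv) x,
      decide (x = (Quotient.mk (pairSetoid ξ hinv) x).out)), ?_, ?_⟩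
  · rintro ⟨q, b⟩
    have hmk : Quotient.mk (pairSetoid ξ hinv) q.out = q := Quotient.out_eq q
    have hmkξ : Quotient.mk (pairSetoid ξ hinv) (ξ q.out) = q := by
      have h1 : Quotient.mk (pairSetoid ξ hinv) (ξ q.out) =
          Quotient.mk (pairSetoid ξ hinv) q.out :=
        Quotient.sound (Or.inr (hxx ξ hinv q.out).symm)
      rw [h1, hmk]
    cases b
    · simp only [if_neg Bool.false_ne_true]
      refine Prod.ext hmkξ ?_
      show decide (ξ q.out = (Quotient.mk (pairSetoid ξ hinv) (ξ q.out)).out) = false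
      rw [hmkξ]
      simp [hfpf q.out]
    · simp only [if_pos]
      refine Prod.ext hmk ?_
      show decide (q.out = (Quotient.mk (pairSetoid ξ hinv) q.out).out) = true
      rw [hmk]
      simp
  · intro x
    have hrel : x = (Quotient.mk (pairSetoid ξ hinv) x).out ∨
        x = ξ (Quotient.mk (pairSetoid ξ hinv) x).out := by
      have h2 : (pairSetoid ξ hinv) ((Quotient.mk (pairSetoid ξ hinv) x).out) x :=
        Quotient.exact (Quotient.out_eq _)
      exact h2
    rcases hrel with h | h
    · simp only
      rw [if_pos (by simpa using h)]
      exact h.symm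
    · have hne : x ≠ (Quotient.mk (pairSetoid ξ hinv) x).out := by
        intro hcon
        refine hfpf (Quotient.mk (pairSetoid ξ hinv) x).out ?_
        conv_rhs => rw [← hcon]
        rw [← h]
      simp only
      rw [if_neg (by simpa using hne)]
      exact h.symm
end Pairing


section ConjLemma
variable {α : Type*} [DecidableEq α] (ξ : Equiv.Perm α) (hinv : ξ * ξ = 1) (hfpf : ∀ x, ξ x ≠ x)

lemma pairEquiv_apply_true (q : Quotient (pairSetoid ξ hinv)) :
    pairEquiv ξ hinv hfpf (q, true) = q.out := rfl

lemma pairEquiv_apply_false (q : Quotient (pairSetoid ξ hinv)) :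
    pairEquiv ξ hinv hfpf (q, false) = ξ q.out := rfl

lemma xi_conj : ξ = (pairEquiv ξ hinv hfpf).permCongr
    (s0 (Quotient (pairSetoid ξ hinv))) := by
  apply Equiv.ext
  intro x
  rw [Equiv.permCongr_apply]
  obtain ⟨⟨q, b⟩, rfl⟩ := (pairEquiv ξ hinv hfpf).surjective x
  rw [Equiv.symm_apply_apply]
  cases b
  · rw [s0_apply, Bool.not_false, pairEquiv_apply_false, pairEquiv_apply_true, hxx ξ hinv]
  · rw [s0_apply, Bool.not_true, pairEquiv_apply_false, pairEquiv_apply_true]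
end ConjLemma

lemma cardH (n : ℕ) (ξ : PermG n) (hinv : ξ * ξ = 1) (hfpf : ∀ x, ξ x ≠ x) :
    Nat.card (wreathH n ξ) = 2 ^ n * n.factorial := by
  classical
  have hQ : Nat.card (Quotient (pairSetoid ξ hinv)) = n := by
    have h1 := Nat.card_congr (pairEquiv ξ hinv hfpf)
    rw [Nat.card_prod] at h1
    have h2 : Nat.card Bool = 2 := by simp [Nat.card_eq_fintype_card]
    have h3 : Nat.card (Fin (2 * n)) = 2 * n := by simp
    rw [h2, h3] at h1
    omega
  rw [wreathH, xi_conj ξ hinv hfpf, card_centralizer_congr_s3, card_centralizer_s0, hQ]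

/-- `Z_d(2n) · (2ⁿ·n!)^d` equals the sum over all conjugacy classes `c` of `G = S_{2n}`
of `|H ∩ c|^d · (|G| / |c|)^{d−1}`. -/
theorem stmt3 (n d : ℕ) (hn : 1 ≤ n) (hd : 1 ≤ d) (ξ : PermG n)
    (hinv : ξ * ξ = 1) (hfpf : ∀ x, ξ x ≠ x) :
    Znum n d ξ * (2 ^ n * n.factorial) ^ d =
      ∑ᶠ c : ConjClasses (PermG n),
        ((wreathH n ξ : Set (PermG n)) ∩ c.carrier).ncard ^ d *
          (Nat.card (PermG n) / c.carrier.ncard) ^ (d - 1) := by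
  have hH := cardH n ξ hinv hfpf
  have hb := burnside (n := n) (d := d) (ξ := ξ)
  have hg := groupSumAux (n := n) (d := d) (ξ := ξ) hd
  rw [hg] at hb
  have hGpos : 0 < Nat.card (PermG n) := Nat.card_pos
  have hb' : (Znum n d ξ * Nat.card (wreathH n ξ) ^ d) * Nat.card (PermG n) =
      (∑ᶠ c : ConjClasses (PermG n),
        ((wreathH n ξ : Set (PermG n)) ∩ c.carrier).ncard ^ d *
          (Nat.card (PermG n) / c.carrier.ncard) ^ (d - 1)) * Nat.card (PermG n) := by
    rw [mul_assoc]
    exact hb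
  have hfin := Nat.eq_of_mul_eq_mul_right hGpos hb'
  rw [← hfin, hH]
end

section
/- For all σ = (σ₁,…,σ_d) and σ' = (σ'₁,…,σ'_d) in G^d, the product in ℂ[G]^{⊗d} satisfies E(σ) · E(σ') = Σ_{β₁,…,β_d ∈ H} Σ_{g ∈ G} E((σ₁ g β₁ σ'₁, …, σ_d g β_d σ'_d)). In particular the linear span K_d(2n) of the elements E(σ) is closed under multiplication, i.e., it is a subalgebra (possibly without the ambient unit) of ℂ[G]^{⊗d}. -/
/-- The element `E(σ) = Σ_{γ₁,…,γ_d ∈ H} Σ_{γ ∈ G} (γ₁σ₁γ) ⊗ ⋯ ⊗ (γ_dσ_dγ)` of the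
`d`-fold tensor power `ℂ[G]^{⊗d}` of the complex group algebra of `G = S_{2n}`. -/
noncomputable def Evec (n d : ℕ) (ξ : PermG n) (σ : Fin d → PermG n) :
    PiTensorProduct ℂ (fun _ : Fin d => MonoidAlgebra ℂ (PermG n)) :=
  ∑ᶠ γv : Fin d → wreathH n ξ, ∑ᶠ γ : PermG n,
    PiTensorProduct.tprod ℂ
      (fun i => MonoidAlgebra.of ℂ (PermG n) ((γv i : PermG n) * σ i * γ))

/-- `K_d(2n)`: the ℂ-linear span of the elements `E(σ)` inside `ℂ[G]^{⊗d}`. -/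
noncomputable def Kspace (n d : ℕ) (ξ : PermG n) :
    Submodule ℂ (PiTensorProduct ℂ (fun _ : Fin d => MonoidAlgebra ℂ (PermG n))) :=
  Submodule.span ℂ (Set.range (Evec n d ξ))


private lemma sum_swap13' {A B C V : Type*} [Fintype A] [Fintype B] [Fintype C]
    [AddCommMonoid V] (f : A → B → C → V) :
    ∑ a, ∑ b, ∑ c, f a b c = ∑ c, ∑ b, ∑ a, f a b c := by
  rw [Finset.sum_comm]
  refine (Finset.sum_congr rfl fun b _ => Finset.sum_comm).trans ?_
  exact Finset.sum_comm

private lemma prodf' (n d : ℕ) (ξ : PermG n) (σ σ' : Fin d → PermG n) :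
    Evec n d ξ σ * Evec n d ξ σ' =
      ∑ᶠ β : Fin d → wreathH n ξ, ∑ᶠ g : PermG n,
        Evec n d ξ (fun i => σ i * g * (β i : PermG n) * σ' i) := by
  haveI : Fintype (Fin d → wreathH n ξ) := Fintype.ofFinite _
  unfold Evec
  simp only [finsum_eq_sum_of_fintype, Finset.sum_mul, Finset.mul_sum,
    PiTensorProduct.tprod_mul_tprod, Pi.mul_def, ← map_mul, mul_assoc]
  exact Finset.sum_congr rfl fun x _ => sum_swap13' _

/-- Product formula: `E(σ) · E(σ') = Σ_{β₁,…,β_d ∈ H} Σ_{g ∈ G} E((σ₁gβ₁σ'₁,…,σ_dgβ_dσ'_d))`;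
in particular the span `K_d(2n)` is closed under multiplication. -/
theorem stmt9 (n d : ℕ) (hn : 1 ≤ n) (hd : 1 ≤ d) (ξ : PermG n)
    (hinv : ξ * ξ = 1) (hfpf : ∀ x, ξ x ≠ x) :
    (∀ σ σ' : Fin d → PermG n,
      Evec n d ξ σ * Evec n d ξ σ' =
        ∑ᶠ β : Fin d → wreathH n ξ, ∑ᶠ g : PermG n,
          Evec n d ξ (fun i => σ i * g * (β i : PermG n) * σ' i)) ∧
    (∀ x y, x ∈ Kspace n d ξ → y ∈ Kspace n d ξ → x * y ∈ Kspace n d ξ) := by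
  haveI : Fintype (Fin d → wreathH n ξ) := Fintype.ofFinite _
  haveI t1 : IsScalarTower ℂ (PiTensorProduct ℂ (fun _ : Fin d => MonoidAlgebra ℂ (PermG n)))
      (PiTensorProduct ℂ (fun _ : Fin d => MonoidAlgebra ℂ (PermG n))) :=
    ⟨fun r x y => by
      show (r • x) * y = r • (x * y)
      rw [PiTensorProduct.mul_def, PiTensorProduct.mul_def, map_smul, LinearMap.smul_apply]⟩
  haveI t2 : SMulCommClass ℂ (PiTensorProduct ℂ (fun _ : Fin d => MonoidAlgebra ℂ (PermG n)))
      (PiTensorProduct ℂ (fun _ : Fin d => MonoidAlgebra ℂ (PermG n))) :=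
    ⟨fun r x y => by
      show r • (x * y) = x * (r • y)
      rw [PiTensorProduct.mul_def, PiTensorProduct.mul_def, map_smul]⟩
  refine ⟨prodf' n d ξ, fun x y hx hy => ?_⟩
  have h1 : x * y ∈ Kspace n d ξ * Kspace n d ξ := Submodule.mul_mem_mul hx hy
  rw [Kspace, Submodule.span_mul_span] at h1
  refine Submodule.span_le.mpr ?_ h1
  rintro z ⟨z1, ⟨σ, rfl⟩, z2, ⟨σ', rfl⟩, rfl⟩
  show Evec n d ξ σ * Evec n d ξ σ' ∈ (Kspace n d ξ : Set _)
  rw [prodf' n d ξ σ σ']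
  simp only [finsum_eq_sum_of_fintype]
  refine Submodule.sum_mem _ fun β _ => Submodule.sum_mem _ fun g _ => ?_
  exact Submodule.subset_span ⟨_, rfl⟩
end

section
/- The pairing 𝛿 restricted to K_d(2n) is nondegenerate: if x ∈ K_d(2n) satisfies 𝛿(x, y) = 0 for all y ∈ K_d(2n), then x = 0. (This is the key step showing that the double coset algebra K_d(2n) is semi-simple.) -/
section Aux

open Finset

/-- `tensorRel` is an equivalence relation. -/
lemma tensorRel_equivalence (n d : ℕ) (ξ : PermG n) :
    Equivalence (tensorRel n d ξ) where
  refl σ := ⟨1, 1, fun i => by simp⟩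
  symm := by
    rintro σ τ ⟨a, α, h⟩
    refine ⟨a⁻¹, α⁻¹, fun i => ?_⟩
    rw [h i]
    simp [mul_assoc]
  trans := by
    rintro σ τ ρ ⟨a, α, h⟩ ⟨b, β, h'⟩
    refine ⟨b * a, α * β, fun i => ?_⟩
    rw [h' i, h i]
    simp [mul_assoc]

/-- Abbreviation for the basic group-like tensors. -/
noncomputable def etp (n d : ℕ) (σ : Fin d → PermG n) :
    PiTensorProduct ℂ (fun _ : Fin d => MonoidAlgebra ℂ (PermG n)) :=
  PiTensorProduct.tprod ℂ (fun i => MonoidAlgebra.of ℂ (PermG n) (σ i))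

lemma Evec_eq_sum (n d : ℕ) (ξ : PermG n) [Fintype ↥(wreathH n ξ)]
    (σ : Fin d → PermG n) :
    Evec n d ξ σ = ∑ p : (Fin d → ↥(wreathH n ξ)) × PermG n,
      etp n d (fun i => ((p.1 i : PermG n)) * σ i * p.2) := by
  rw [Evec, finsum_eq_sum_of_fintype]
  simp_rw [finsum_eq_sum_of_fintype]
  rw [← Finset.sum_product', Finset.univ_product_univ]
  rfl

lemma Evec_invariant (n d : ℕ) (ξ : PermG n) [Fintype ↥(wreathH n ξ)]
    {σ τ : Fin d → PermG n} (h : tensorRel n d ξ σ τ) :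
    Evec n d ξ σ = Evec n d ξ τ := by
  obtain ⟨b, β, hb⟩ := h
  rw [Evec_eq_sum, Evec_eq_sum]
  refine (Fintype.sum_equiv
    ((Equiv.mulRight b).prodCongr (Equiv.mulLeft β)) _ _ fun p => ?_).symm
  simp only [Equiv.prodCongr_apply, Equiv.coe_mulRight, Equiv.coe_mulLeft, Prod.map]
  congr 1
  funext i
  rw [hb i]
  simp [mul_assoc]

end Aux

/-- The pairing `𝛿` (the bilinear form determined on group-like elements by
`𝛿(σ₁⊗⋯⊗σ_d, τ₁⊗⋯⊗τ_d) = δ_{στ}`) restricted to `K_d(2n)` is nondegenerate: if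
`x ∈ K_d(2n)` satisfies `𝛿(x, y) = 0` for all `y ∈ K_d(2n)`, then `x = 0`. -/
theorem stmt11 (n d : ℕ) (hn : 1 ≤ n) (hd : 1 ≤ d) (ξ : PermG n)
    (hinv : ξ * ξ = 1) (hfpf : ∀ x, ξ x ≠ x)
    (δp : PiTensorProduct ℂ (fun _ : Fin d => MonoidAlgebra ℂ (PermG n)) →ₗ[ℂ]
          PiTensorProduct ℂ (fun _ : Fin d => MonoidAlgebra ℂ (PermG n)) →ₗ[ℂ] ℂ)
    (hδ : ∀ σ τ : Fin d → PermG n,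
      δp (PiTensorProduct.tprod ℂ (fun i => MonoidAlgebra.of ℂ (PermG n) (σ i)))
         (PiTensorProduct.tprod ℂ (fun i => MonoidAlgebra.of ℂ (PermG n) (τ i))) =
        if σ = τ then 1 else 0) :
    ∀ x ∈ Kspace n d ξ, (∀ y ∈ Kspace n d ξ, δp x y = 0) → x = 0 := by
  classical
  haveI : Fintype ↥(wreathH n ξ) := Fintype.ofFinite _
  intro x hx h0
  obtain ⟨c, hc⟩ := (Submodule.mem_span_range_iff_exists_fun ℂ).mp hx
  -- the indicator formula for δp on E-vectors
  have hrel := tensorRel_equivalence n d ξ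
  have hδE : ∀ σ τ : Fin d → PermG n,
      δp (Evec n d ξ σ) (Evec n d ξ τ) =
        ∑ p : (Fin d → ↥(wreathH n ξ)) × PermG n,
          ∑ q : (Fin d → ↥(wreathH n ξ)) × PermG n,
            (if (fun i => ((p.1 i : PermG n)) * σ i * p.2)
                = (fun i => ((q.1 i : PermG n)) * τ i * q.2) then (1 : ℂ) else 0) := by
    intro σ τ
    rw [Evec_eq_sum, Evec_eq_sum]
    simp only [map_sum, LinearMap.sum_apply]
    rw [Finset.sum_comm]
    exact Finset.sum_congr rfl fun p _ => Finset.sum_congr rfl fun q _ => hδ _ _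
  -- vanishing off the diagonal classes
  have hzero : ∀ σ τ : Fin d → PermG n, ¬ tensorRel n d ξ σ τ →
      δp (Evec n d ξ σ) (Evec n d ξ τ) = 0 := by
    intro σ τ hne
    rw [hδE]
    refine Finset.sum_eq_zero fun p _ => Finset.sum_eq_zero fun q _ => ?_
    rw [if_neg]
    intro heq
    refine hne ⟨fun i => (q.1 i)⁻¹ * p.1 i, p.2 * q.2⁻¹, fun i => ?_⟩
    have h1 : ((p.1 i : PermG n)) * σ i * p.2 = (q.1 i : PermG n) * τ i * q.2 :=
      congrFun heq i
    have h2 : ((q.1 i : PermG n))⁻¹ * (((p.1 i : PermG n)) * σ i * p.2) * q.2⁻¹ = τ i := by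
      rw [h1]; group
    simp only [Pi.mul_apply, Pi.inv_apply, Subgroup.coe_mul, InvMemClass.coe_inv]
    rw [← h2]; group
  -- nonvanishing on the diagonal
  have hDne : ∀ τ : Fin d → PermG n, δp (Evec n d ξ τ) (Evec n d ξ τ) ≠ 0 := by
    intro τ
    rw [hδE]
    have hcard : ∀ p : (Fin d → ↥(wreathH n ξ)) × PermG n,
        (∑ q : (Fin d → ↥(wreathH n ξ)) × PermG n,
          (if (fun i => ((p.1 i : PermG n)) * τ i * p.2)
              = (fun i => ((q.1 i : PermG n)) * τ i * q.2) then (1 : ℂ) else 0)) =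
        ((Finset.univ.filter fun q : (Fin d → ↥(wreathH n ξ)) × PermG n =>
          (fun i => ((p.1 i : PermG n)) * τ i * p.2)
              = (fun i => ((q.1 i : PermG n)) * τ i * q.2)).card : ℂ) :=
      fun p => Finset.sum_boole _ _
    rw [Finset.sum_congr rfl fun p _ => hcard p, ← Nat.cast_sum]
    rw [Nat.cast_ne_zero]
    have : (0 : ℕ) < ∑ p : (Fin d → ↥(wreathH n ξ)) × PermG n,
        (Finset.univ.filter fun q : (Fin d → ↥(wreathH n ξ)) × PermG n =>
          (fun i => ((p.1 i : PermG n)) * τ i * p.2)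
              = (fun i => ((q.1 i : PermG n)) * τ i * q.2)).card := by
      refine Finset.sum_pos (fun p _ => Finset.card_pos.mpr
        ⟨p, Finset.mem_filter.mpr ⟨Finset.mem_univ _, rfl⟩⟩) ?_
      exact ⟨(fun _ => 1, 1), Finset.mem_univ _⟩
    omega
  -- class sums of coefficients vanish
  have hclass : ∀ τ : Fin d → PermG n,
      (∑ σ ∈ Finset.univ.filter (fun σ => tensorRel n d ξ σ τ), c σ) = 0 := by
    intro τ
    have h1 : δp x (Evec n d ξ τ) = 0 :=
      h0 _ (Submodule.subset_span ⟨τ, rfl⟩)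
    rw [← hc] at h1
    simp only [map_sum, LinearMap.sum_apply, map_smul, LinearMap.smul_apply,
      smul_eq_mul] at h1
    have h2 : ∀ σ : Fin d → PermG n,
        c σ * δp (Evec n d ξ σ) (Evec n d ξ τ) =
          if tensorRel n d ξ σ τ then c σ * δp (Evec n d ξ τ) (Evec n d ξ τ) else 0 := by
      intro σ
      by_cases hr : tensorRel n d ξ σ τ
      · rw [if_pos hr, Evec_invariant n d ξ hr]
      · rw [if_neg hr, hzero σ τ hr, mul_zero]
    rw [Finset.sum_congr rfl fun σ _ => h2 σ, ← Finset.sum_filter] at h1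
    rw [← Finset.sum_mul] at h1
    exact (mul_eq_zero.mp h1).resolve_right (hDne τ)
  -- regroup x over equivalence classes
  haveI : Finite (Quot (tensorRel n d ξ)) :=
    Finite.of_surjective (Quot.mk _) Quot.mk_surjective
  haveI : Fintype (Quot (tensorRel n d ξ)) := Fintype.ofFinite _
  have hout : ∀ σ : Fin d → PermG n,
      Evec n d ξ σ = Evec n d ξ (Quot.out (Quot.mk (tensorRel n d ξ) σ)) := by
    intro σ
    refine Evec_invariant n d ξ (hrel.eqvGen_iff.mp (Quot.eq.mp ?_))
    rw [Quot.out_eq]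
  rw [← hc]
  rw [Finset.sum_congr rfl fun σ _ => by rw [hout σ]]
  rw [← Finset.sum_fiberwise_of_maps_to
    (fun σ _ => Finset.mem_univ (Quot.mk (tensorRel n d ξ) σ))
    (fun σ => c σ • Evec n d ξ (Quot.out (Quot.mk (tensorRel n d ξ) σ)))]
  refine Finset.sum_eq_zero fun q _ => ?_
  have hfib : ∀ σ ∈ Finset.univ.filter
      (fun σ => Quot.mk (tensorRel n d ξ) σ = q),
      c σ • Evec n d ξ (Quot.out (Quot.mk (tensorRel n d ξ) σ))
        = c σ • Evec n d ξ (Quot.out q) := by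
    intro σ hσ
    rw [(Finset.mem_filter.mp hσ).2]
  rw [Finset.sum_congr rfl hfib, ← Finset.sum_smul]
  have hfe : (Finset.univ.filter fun σ => Quot.mk (tensorRel n d ξ) σ = q)
      = Finset.univ.filter (fun σ => tensorRel n d ξ σ (Quot.out q)) := by
    refine Finset.filter_congr fun σ _ => ?_
    constructor
    · intro h
      refine hrel.eqvGen_iff.mp (Quot.eq.mp ?_)
      rw [h, Quot.out_eq]
    · intro h
      exact (Quot.sound h).trans (Quot.out_eq q)
  rw [hfe, hclass, zero_smul]
end
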